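/- (Turán-type inequality.) For every integer n ≥ 1 and every real x > 0, I_{n−1}(x)·I_{n+1}(x) < I_n(x)². -/

import Mathlib

/-- The modified Bessel function of the first kind of (nonnegative integer) order `n`:
`I_n(x) = (x/2)^n * ∑_{k=0}^∞ (x/2)^{2k} / (k! (n+k)!)`. -/
noncomputable def besselI (n : ℕ) (x : ℝ) : ℝ :=
  (x / 2) ^ n * ∑' k : ℕ, (x / 2) ^ (2 * k) / ((Nat.factorial k : ℝ) * (Nat.factorial (n + k) : ℝ))

open Finset

/-- Shifted Vandermonde identity. -/
private lemma vand (M m s : ℕ) :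
    ∑ k ∈ Finset.range (m + 1), m.choose k * M.choose (s + k) = (m + M).choose (s + m) := by
  have h2 := Finset.sum_range_reflect (fun k => m.choose k * M.choose (s + m - k)) (m + 1)
  have h1 : ∑ k ∈ Finset.range (m + 1), m.choose k * M.choose (s + k)
      = ∑ k ∈ Finset.range (m + 1), m.choose k * M.choose (s + m - k) := by
    rw [← h2]
    refine Finset.sum_congr rfl fun k hk => ?_
    simp only [Finset.mem_range] at hk
    have hk' : k ≤ m := by omega
    show _ = m.choose (m + 1 - 1 - k) * M.choose (s + m - (m + 1 - 1 - k))
    rw [show m + 1 - 1 - k = m - k from by omega, Nat.choose_symm hk',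
      show s + m - (m - k) = s + k from by omega]
  rw [h1, Nat.add_choose_eq m M (s + m), Finset.Nat.sum_antidiagonal_eq_sum_range_succ_mk]
  refine Finset.sum_subset (Finset.range_subset_range.2 (by omega)) fun y hy hny => ?_
  simp only [Finset.mem_range] at hy hny
  rw [Nat.choose_eq_zero_of_lt (by omega), zero_mul]

private lemma choose_strict (p : ℕ) : (2 * p + 2).choose p < (2 * p + 2).choose (p + 1) := by
  have h := Nat.choose_succ_right_eq (2 * p + 2) p
  have hpos : 0 < (2 * p + 2).choose p := Nat.choose_pos (by omega)
  rw [show 2 * p + 2 - p = p + 2 from by omega] at h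
  nlinarith [h, hpos]

private lemma bterm_eq (u v m k : ℕ) (hk : k ≤ m) (t : ℝ) :
    t ^ k / ((k.factorial : ℝ) * ((u + k).factorial : ℝ)) *
      (t ^ (m - k) / (((m - k).factorial : ℝ) * ((v + (m - k)).factorial : ℝ))) =
    ((m.choose k * (u + v + m).choose (u + k) : ℕ) : ℝ) * t ^ m /
      ((m.factorial : ℝ) * ((u + v + m).factorial : ℝ)) := by
  have e1 : ((m.choose k : ℕ) : ℝ) * k.factorial * (m - k).factorial = m.factorial := by
    exact_mod_cast Nat.choose_mul_factorial_mul_factorial hk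
  have e2 : (((u + v + m).choose (u + k) : ℕ) : ℝ) * (u + k).factorial *
      (v + (m - k)).factorial = (u + v + m).factorial := by
    have h := Nat.choose_mul_factorial_mul_factorial (show u + k ≤ u + v + m by omega)
    rw [show u + v + m - (u + k) = v + (m - k) from by omega] at h
    exact_mod_cast h
  have h3 : t ^ k * t ^ (m - k) = t ^ m := by
    rw [← pow_add, Nat.add_sub_cancel' hk]
  rw [div_mul_div_comm, h3, div_eq_div_iff (by positivity) (by positivity)]
  push_cast
  rw [← e1, ← e2]
  ring

private lemma cauchy_coeff (u v m : ℕ) (t : ℝ) :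
    ∑ k ∈ Finset.range (m + 1),
      t ^ k / ((k.factorial : ℝ) * ((u + k).factorial : ℝ)) *
        (t ^ (m - k) / (((m - k).factorial : ℝ) * ((v + (m - k)).factorial : ℝ))) =
    (((u + v + 2 * m).choose (u + m) : ℕ) : ℝ) * t ^ m /
      ((m.factorial : ℝ) * ((u + v + m).factorial : ℝ)) := by
  rw [Finset.sum_congr rfl fun k hk =>
    bterm_eq u v m k (by simpa [Nat.lt_succ_iff] using hk) t]
  rw [← Finset.sum_div, ← Finset.sum_mul, ← Nat.cast_sum]
  rw [vand (u + v + m) m u, show m + (u + v + m) = u + v + 2 * m from by omega]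

private lemma summable_a (u : ℕ) (t : ℝ) :
    Summable fun k : ℕ => t ^ k / ((k.factorial : ℝ) * ((u + k).factorial : ℝ)) := by
  refine (Real.summable_pow_div_factorial |t|).of_norm_bounded fun k => ?_
  rw [Real.norm_eq_abs, abs_div, abs_pow]
  have h1 : |((k.factorial : ℝ) * ((u + k).factorial : ℝ))|
      = (k.factorial : ℝ) * ((u + k).factorial : ℝ) := abs_of_pos (by positivity)
  rw [h1]
  apply div_le_div_of_nonneg_left (by positivity) (by positivity)
  exact le_mul_of_one_le_right (by positivity) (by exact_mod_cast (u + k).factorial_pos)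

private lemma summable_a_norm (u : ℕ) (t : ℝ) :
    Summable fun k : ℕ =>
      ‖t ^ k / ((k.factorial : ℝ) * ((u + k).factorial : ℝ))‖ := by
  simpa only [Real.norm_eq_abs] using (summable_a u t).abs

/-- Turán-type inequality: for every integer `n ≥ 1` and real `x > 0`,
`I_{n-1}(x)·I_{n+1}(x) < I_n(x)²`. -/
theorem besselI_turan (n : ℕ) (hn : 1 ≤ n) (x : ℝ) (hx : 0 < x) :
    besselI (n - 1) x * besselI (n + 1) x < besselI n x ^ 2 := by
  obtain ⟨p, rfl⟩ : ∃ p, n = p + 1 := ⟨n - 1, by omega⟩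
  unfold besselI
  simp only [Nat.add_sub_cancel]
  set q : ℝ := x / 2 with hqdef
  have hq0 : 0 < q := by positivity
  set t : ℝ := q ^ 2 with htdef
  have ht0 : 0 < t := by positivity
  have hpow : ∀ u : ℕ,
      (∑' k : ℕ, q ^ (2 * k) / ((k.factorial : ℝ) * ((u + k).factorial : ℝ)))
      = ∑' k : ℕ, t ^ k / ((k.factorial : ℝ) * ((u + k).factorial : ℝ)) :=
    fun u => tsum_congr fun k => by rw [htdef, ← pow_mul]
  rw [hpow p, hpow (p + 1), hpow (p + 1 + 1)]
  set S : ℕ → ℝ := fun u => ∑' k : ℕ, t ^ k / ((k.factorial : ℝ) * ((u + k).factorial : ℝ))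
    with hSdef
  have key : S p * S (p + 2) < S (p + 1) * S (p + 1) := by
    rw [hSdef]
    rw [tsum_mul_tsum_eq_tsum_sum_range_of_summable_norm (summable_a_norm p t)
      (summable_a_norm (p + 2) t),
      tsum_mul_tsum_eq_tsum_sum_range_of_summable_norm (summable_a_norm (p + 1) t)
      (summable_a_norm (p + 1) t)]
    refine Summable.tsum_lt_tsum_of_nonneg (i := 0) ?_ ?_ ?_ ?_
    · intro m
      exact Finset.sum_nonneg fun k _ => by positivity
    · intro m
      rw [cauchy_coeff p (p + 2) m t, cauchy_coeff (p + 1) (p + 1) m t]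
      rw [show p + (p + 2) + 2 * m = 2 * p + 2 * m + 2 from by omega,
        show p + 1 + (p + 1) + 2 * m = 2 * p + 2 * m + 2 from by omega,
        show p + (p + 2) + m = p + 1 + (p + 1) + m from by omega,
        show p + 1 + m = (p + m) + 1 from by omega]
      gcongr
      exact_mod_cast Nat.choose_le_succ_of_lt_half_left (show p + m < (2 * p + 2 * m + 2) / 2
        from by omega)
    · rw [cauchy_coeff p (p + 2) 0 t, cauchy_coeff (p + 1) (p + 1) 0 t]
      rw [show p + (p + 2) + 2 * 0 = 2 * p + 2 from by omega,
        show p + 1 + (p + 1) + 2 * 0 = 2 * p + 2 from by omega]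
      norm_num
      gcongr
      exact_mod_cast choose_strict p
    · exact (summable_norm_sum_mul_range_of_summable_norm (summable_a_norm (p + 1) t)
        (summable_a_norm (p + 1) t)).of_norm
  have hq2 : (0 : ℝ) < q ^ (2 * p + 2) := by positivity
  calc q ^ p * S p * (q ^ (p + 1 + 1) * S (p + 1 + 1))
      = q ^ (2 * p + 2) * (S p * S (p + 2)) := by ring
    _ < q ^ (2 * p + 2) * (S (p + 1) * S (p + 1)) := by
        exact mul_lt_mul_of_pos_left key hq2
    _ = (q ^ (p + 1) * S (p + 1)) ^ 2 := by ring
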